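/- Let (V,J) be a real vector space with a complex structure and ω a non-degenerate alternating J-invariant bilinear form on V. Then V has a basis x₁,y₁,...,xₙ,yₙ such that ω(xᵢ,yᵢ) = 1, ω(xᵢ,xⱼ) = ω(yᵢ,yⱼ) = 0, ω(xᵢ,yⱼ) = 0 for i ≠ j, and Jxᵢ = ±yᵢ for each i. -/

import Mathlib

open Module Submodule

lemma aux15 {V : Type*} [AddCommGroup V] [Module ℝ V] [FiniteDimensional ℝ V]
    (J : V →ₗ[ℝ] V) (hJ : ∀ v, J (J v) = -v)
    (ω : V →ₗ[ℝ] V →ₗ[ℝ] ℝ)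
    (halt : ∀ x : V, ω x x = 0)
    (hinv : ∀ x y : V, ω (J x) (J y) = ω x y) :
    ∀ (k : ℕ) (W : Submodule ℝ V), finrank ℝ W = k →
    (∀ w ∈ W, J w ∈ W) →
    (∀ x ∈ W, (∀ y ∈ W, ω x y = 0) → x = 0) →
    ∃ (n : ℕ) (f : Fin n × Fin 2 → V),
      (∀ p, f p ∈ W) ∧
      Submodule.span ℝ (Set.range f) = W ∧
      (∀ i, ω (f (i, 0)) (f (i, 1)) = 1) ∧
      (∀ i j, ω (f (i, 0)) (f (j, 0)) = 0) ∧
      (∀ i j, ω (f (i, 1)) (f (j, 1)) = 0) ∧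
      (∀ i j, i ≠ j → ω (f (i, 0)) (f (j, 1)) = 0) ∧
      (∀ i, J (f (i, 0)) = f (i, 1) ∨ J (f (i, 0)) = -f (i, 1)) := by
  have hskew : ∀ x y : V, ω y x = -ω x y := by
    intro x y
    have h := halt (x + y)
    simp only [map_add, LinearMap.add_apply, halt] at h
    linarith
  intro k
  induction k using Nat.strong_induction_on with
  | _ k IH =>
  intro W hk hJW hnd
  by_cases hW : ∃ x ∈ W, ω x (J x) ≠ 0
  · obtain ⟨x, hxW, hx⟩ := hW
    set c := ω x (J x) with hc
    set r : ℝ := Real.sqrt |c| with hr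
    have hrpos : 0 < r := Real.sqrt_pos.2 (abs_pos.2 hx)
    have hrr : r * r = |c| := Real.mul_self_sqrt (abs_nonneg c)
    set x' : V := r⁻¹ • x with hx'
    have hx'W : x' ∈ W := Submodule.smul_mem _ _ hxW
    have hωx' : ω x' (J x') = c / |c| := by
      simp only [hx', map_smul, LinearMap.smul_apply, smul_eq_mul, ← hc]
      rw [← hrr]
      field_simp
    set y' : V := if 0 < c then J x' else -(J x') with hy'
    have hy'W : y' ∈ W := by
      rw [hy']
      split
      · exact hJW _ hx'W
      · exact Submodule.neg_mem _ (hJW _ hx'W)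
    have hsign : J x' = y' ∨ J x' = -y' := by
      rw [hy']
      split
      · exact Or.inl rfl
      · exact Or.inr (by rw [neg_neg])
    have hxy1 : ω x' y' = 1 := by
      rw [hy']
      rcases lt_or_gt_of_ne hx with hneg | hpos
      · rw [if_neg (not_lt.2 hneg.le), map_neg, hωx', abs_of_neg hneg]
        field_simp
      · rw [if_pos hpos, hωx', abs_of_pos hpos]
        field_simp
    have hyx : ω y' x' = -1 := by rw [hskew, hxy1]
    have hxx : ω x' x' = 0 := halt x'
    have hyy : ω y' y' = 0 := halt y'
    -- the orthogonal complement of span{x',y'} in W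
    set W' : Submodule ℝ V := W ⊓ LinearMap.ker (ω x') ⊓ LinearMap.ker (ω y') with hW'
    have hmem' : ∀ v, v ∈ W' ↔ v ∈ W ∧ ω x' v = 0 ∧ ω y' v = 0 := by
      intro v
      simp [hW', Submodule.mem_inf, LinearMap.mem_ker, and_assoc]
    -- decomposition
    have hdecomp : ∀ w ∈ W, w + (ω y' w) • x' - (ω x' w) • y' ∈ W' := by
      intro w hw
      rw [hmem']
      refine ⟨by exact Submodule.sub_mem _ (Submodule.add_mem _ hw
        (Submodule.smul_mem _ _ hx'W)) (Submodule.smul_mem _ _ hy'W), ?_, ?_⟩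
      · simp [map_add, map_sub, map_smul, hxx, hxy1]
      · simp [map_add, map_sub, map_smul, hyy, hyx]
    have hJW' : ∀ v ∈ W', J v ∈ W' := by
      intro v hv
      rw [hmem'] at hv ⊢
      obtain ⟨hvW, hv1, hv2⟩ := hv
      have key : ∀ u : V, ω u (J v) = -(ω (J u) v) := by
        intro u
        have : ω (J u) v = ω (J (J u)) (J v) := (hinv (J u) v).symm
        rw [this, hJ, map_neg, LinearMap.neg_apply, neg_neg]
      refine ⟨hJW _ hvW, ?_, ?_⟩
      · rw [key]
        rcases hsign with h | h <;> rw [h] <;> simp [hv2]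
      · rw [key]
        have hJy : J y' = x' ∨ J y' = -x' := by
          rcases hsign with h | h
          · right; rw [← h, hJ]
          · left
            have hy'' : y' = -(J x') := by rw [h, neg_neg]
            rw [hy'', map_neg, hJ, neg_neg]
        rcases hJy with h | h <;> rw [h] <;> simp [hv1]
    have hnd' : ∀ u ∈ W', (∀ v ∈ W', ω u v = 0) → u = 0 := by
      intro u huW' hu
      rw [hmem'] at huW'
      obtain ⟨huW, hu1, hu2⟩ := huW'
      refine hnd u huW ?_
      intro w hw
      have hv := hu _ (hdecomp w hw)
      have hux : ω u x' = 0 := by rw [hskew] at hu1; linarith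
      have huy : ω u y' = 0 := by rw [hskew] at hu2; linarith
      simp only [map_add, map_sub, map_smul, smul_eq_mul, hux, huy,
        LinearMap.sub_apply, LinearMap.add_apply, LinearMap.smul_apply] at hv
      linarith [hv]
    have hlt : W' < W := by
      rw [SetLike.lt_iff_le_and_exists]
      refine ⟨le_trans inf_le_left inf_le_left, x', hx'W, ?_⟩
      rw [hmem']
      rintro ⟨-, -, h⟩
      rw [hyx] at h
      norm_num at h
    have hfr : finrank ℝ W' < k := hk ▸ Submodule.finrank_lt_finrank_of_lt hlt
    obtain ⟨n, g, hgW, hgspan, h1, h2, h3, h4, h5⟩ :=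
      IH _ hfr W' rfl hJW' hnd'
    have hgW' := fun p => (hmem' (g p)).1 (hgW p)
    -- extended family
    set f : Fin (n + 1) × Fin 2 → V := fun p =>
      if h : p.1 = 0 then (if p.2 = 0 then x' else y') else g (p.1.pred h, p.2) with hfdef
    have hf00 : f (0, 0) = x' := by simp [hfdef]
    have hf01 : f (0, 1) = y' := by
      show (if h : (0 : Fin (n+1)) = 0 then (if (1 : Fin 2) = 0 then x' else y')
        else g ((0 : Fin (n+1)).pred h, 1)) = y'
      rw [dif_pos rfl, if_neg (by decide : (1 : Fin 2) ≠ 0)]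
    have hfs : ∀ (i : Fin n) (j : Fin 2), f (i.succ, j) = g (i, j) := by
      intro i j
      show (if h : i.succ = 0 then _ else g (i.succ.pred h, j)) = g (i, j)
      rw [dif_neg (Fin.succ_ne_zero i), Fin.pred_succ]
    have hfW : ∀ p, f p ∈ W := by
      rintro ⟨i, j⟩
      induction i using Fin.cases with
      | zero =>
        have : f (0, j) = if j = 0 then x' else y' := dif_pos rfl
        rw [this]; split <;> assumption
      | succ i => rw [hfs]; exact (hgW' _).1
    refine ⟨n + 1, f, hfW, ?_, ?_, ?_, ?_, ?_, ?_⟩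
    · -- span
      apply le_antisymm
      · rw [Submodule.span_le]
        rintro _ ⟨p, rfl⟩
        exact hfW p
      · intro w hw
        have hv : w + (ω y' w) • x' - (ω x' w) • y' ∈ span ℝ (Set.range g) := by
          rw [hgspan]; exact hdecomp w hw
        have hsub : span ℝ (Set.range g) ≤ span ℝ (Set.range f) := by
          apply Submodule.span_mono
          rintro _ ⟨⟨i, j⟩, rfl⟩
          exact ⟨(i.succ, j), hfs i j⟩
        have hx's : x' ∈ span ℝ (Set.range f) := Submodule.subset_span ⟨(0, 0), hf00⟩
        have hy's : y' ∈ span ℝ (Set.range f) := Submodule.subset_span ⟨(0, 1), hf01⟩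
        have hw' : w = (w + (ω y' w) • x' - (ω x' w) • y') - (ω y' w) • x'
            + (ω x' w) • y' := by abel
        rw [hw']
        exact Submodule.add_mem _ (Submodule.sub_mem _ (hsub hv)
          (Submodule.smul_mem _ _ hx's)) (Submodule.smul_mem _ _ hy's)
    · intro i
      induction i using Fin.cases with
      | zero => rw [hf00, hf01]; exact hxy1
      | succ i => rw [hfs, hfs]; exact h1 i
    · intro i j
      induction i using Fin.cases with
      | zero =>
        induction j using Fin.cases with
        | zero => rw [hf00]; exact hxx
        | succ j => rw [hf00, hfs]; exact (hgW' (j, 0)).2.1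
      | succ i =>
        induction j using Fin.cases with
        | zero => rw [hfs, hf00, hskew, (hgW' (i, 0)).2.1, neg_zero]
        | succ j => rw [hfs, hfs]; exact h2 i j
    · intro i j
      induction i using Fin.cases with
      | zero =>
        induction j using Fin.cases with
        | zero => rw [hf01]; exact hyy
        | succ j => rw [hf01, hfs]; exact (hgW' (j, 1)).2.2
      | succ i =>
        induction j using Fin.cases with
        | zero => rw [hfs, hf01, hskew, (hgW' (i, 1)).2.2, neg_zero]
        | succ j => rw [hfs, hfs]; exact h3 i j
    · intro i j hij
      induction i using Fin.cases with
      | zero =>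
        induction j using Fin.cases with
        | zero => exact absurd rfl hij
        | succ j => rw [hf00, hfs]; exact (hgW' (j, 1)).2.1
      | succ i =>
        induction j using Fin.cases with
        | zero => rw [hfs, hf01, hskew, (hgW' (i, 0)).2.2, neg_zero]
        | succ j =>
          rw [hfs, hfs]
          exact h4 i j (fun h => hij (congrArg Fin.succ h))
    · intro i
      induction i using Fin.cases with
      | zero => rw [hf00, hf01]; exact hsign
      | succ i => rw [hfs, hfs]; exact h5 i
  · -- degenerate case: W = ⊥
    push_neg at hW
    have hWbot : W = ⊥ := by
      rw [Submodule.eq_bot_iff]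
      intro x hxW
      refine hnd x hxW ?_
      intro y hyW
      have hsymm : ∀ a b : V, ω b (J a) = ω a (J b) := by
        intro a b
        rw [← hinv b (J a), hJ, map_neg, hskew, neg_neg]
      have hpol : ∀ a ∈ W, ∀ b ∈ W, ω a (J b) = 0 := by
        intro a ha b hb
        have h := hW (a + b) (Submodule.add_mem _ ha hb)
        simp only [map_add, LinearMap.add_apply, hW a ha, hW b hb] at h
        have h2 := hsymm a b
        linarith
      have := hpol x hxW (J y) (hJW _ hyW)
      rw [hJ] at this
      simpa using this
    refine ⟨0, fun p => 0, fun p => Submodule.zero_mem _, ?_,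
      fun i => i.elim0, fun i => i.elim0, fun i => i.elim0, fun i => i.elim0,
      fun i => i.elim0⟩
    rw [hWbot, Submodule.span_eq_bot]
    rintro _ ⟨p, rfl⟩
    rfl

/-- A real vector space with complex structure `J` and non-degenerate alternating
`J`-invariant form `ω` has a symplectic basis `x₁,y₁,…,xₙ,yₙ` with `Jxᵢ = ±yᵢ`.
Here `b (i,0)` plays the role of `xᵢ` and `b (i,1)` that of `yᵢ`. -/
theorem stmt_15 (V : Type*) [AddCommGroup V] [Module ℝ V] [FiniteDimensional ℝ V]
    (J : V →ₗ[ℝ] V) (hJ : J ∘ₗ J = -LinearMap.id)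
    (ω : V →ₗ[ℝ] V →ₗ[ℝ] ℝ)
    (halt : ∀ x : V, ω x x = 0)
    (hnd : ∀ x : V, (∀ y : V, ω x y = 0) → x = 0)
    (hinv : ∀ x y : V, ω (J x) (J y) = ω x y) :
    ∃ (n : ℕ) (b : Basis (Fin n × Fin 2) ℝ V),
      (∀ i : Fin n, ω (b (i, 0)) (b (i, 1)) = 1) ∧
      (∀ i j : Fin n, ω (b (i, 0)) (b (j, 0)) = 0) ∧
      (∀ i j : Fin n, ω (b (i, 1)) (b (j, 1)) = 0) ∧
      (∀ i j : Fin n, i ≠ j → ω (b (i, 0)) (b (j, 1)) = 0) ∧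
      (∀ i : Fin n, J (b (i, 0)) = b (i, 1) ∨ J (b (i, 0)) = -b (i, 1)) := by
  have hJ' : ∀ v, J (J v) = -v := by
    intro v
    have h := LinearMap.congr_fun hJ v
    simpa using h
  obtain ⟨n, f, hfW, hfspan, h1, h2, h3, h4, h5⟩ :=
    aux15 J hJ' ω halt hinv (finrank ℝ (⊤ : Submodule ℝ V)) ⊤ rfl
      (fun w _ => trivial) (fun x _ h => hnd x (fun y => h y trivial))
  have hspan : ⊤ ≤ span ℝ (Set.range f) := by rw [hfspan]
  have key : ∀ (gc : Fin n × Fin 2 → ℝ), (∑ p, gc p • f p) = 0 →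
      ∀ i : Fin n, gc (i, 0) = 0 ∧ gc (i, 1) = 0 := by
    intro gc hsum i
    constructor
    · have h := congrArg (ω.flip (f (i, 1))) hsum
      rw [map_sum, map_zero] at h
      simp only [map_smul, LinearMap.flip_apply, smul_eq_mul] at h
      rw [Fintype.sum_prod_type] at h
      simp only [Fin.sum_univ_two, h3, mul_zero, add_zero] at h
      rw [Finset.sum_eq_single i (fun b _ hb => by rw [h4 b i hb, mul_zero])
        (fun hi => absurd (Finset.mem_univ i) hi)] at h
      rwa [h1 i, mul_one] at h
    · have h := congrArg (ω (f (i, 0))) hsum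
      rw [map_sum, map_zero] at h
      simp only [map_smul, smul_eq_mul] at h
      rw [Fintype.sum_prod_type] at h
      simp only [Fin.sum_univ_two, h2, mul_zero, zero_add] at h
      rw [Finset.sum_eq_single i
        (fun b _ hb => by rw [h4 i b (Ne.symm hb), mul_zero])
        (fun hi => absurd (Finset.mem_univ i) hi)] at h
      rwa [h1 i, mul_one] at h
  have hli : LinearIndependent ℝ f := by
    rw [Fintype.linearIndependent_iff]
    intro gc hsum
    rintro ⟨i, j⟩
    fin_cases j
    · exact (key gc hsum i).1
    · exact (key gc hsum i).2
  exact ⟨n, Basis.mk hli hspan,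
    by simpa only [Basis.coe_mk] using h1,
    by simpa only [Basis.coe_mk] using h2,
    by simpa only [Basis.coe_mk] using h3,
    by simpa only [Basis.coe_mk] using h4,
    by simpa only [Basis.coe_mk] using h5⟩
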